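/- arXiv:2512.20895 — 3 statements merged into one kernel-verified Lean document; each statement's English description precedes it below -/
import Mathlib

section
/- Let Γ, a > 0 and A₁, A₂ > 0 be constants with q := (Γa)²/(A₁A₂). Define T_m := K_m(A₁)·K_m(A₂)·∫₀ᵃ I_m(Γr)² r dr for integers m ≥ 1. Then T_m ≤ (e^{2Γa}a²/8)·(q^m/m²) for all m ≥ 1; consequently if q < 1 the series Σ_{m≥1} T_m converges absolutely. -/
open Real MeasureTheory

/-- The modified Bessel function of the second kind of integer order `m`,
via its integral representation for `x > 0`. -/
noncomputable def besselK (m : ℕ) (x : ℝ) : ℝ :=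
  Real.sqrt π * (x / 2) ^ m / Real.Gamma ((m : ℝ) + 1 / 2) *
    ∫ t in Set.Ioi (1 : ℝ), Real.exp (-x * t) * (t ^ 2 - 1) ^ ((m : ℝ) - 1 / 2)

/-- The modified Bessel function of the first kind of integer order `m`,
via its power series. -/
noncomputable def besselI (m : ℕ) (x : ℝ) : ℝ :=
  ∑' k : ℕ, (x / 2) ^ (m + 2 * k) / ((k.factorial : ℝ) * (m + k).factorial)

lemma fact_ineq (m k : ℕ) : m.factorial * (2*k).factorial ≤ 4^k * (k.factorial * (m+k).factorial) := by
  have h1 : (2*k).choose k * (k.factorial * k.factorial) = (2*k).factorial := by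
    have := Nat.choose_mul_factorial_mul_factorial (show k ≤ 2*k by omega)
    rw [show 2*k - k = k by omega] at this
    rw [← this]; ring
  have h2 : (2*k).choose k ≤ 4^k := by
    calc (2*k).choose k ≤ ∑ i ∈ Finset.range (2*k+1), (2*k).choose i :=
          Finset.single_le_sum (fun i _ => Nat.zero_le _) (by simp; omega)
      _ = 2^(2*k) := Nat.sum_range_choose (2*k)
      _ = 4^k := by rw [pow_mul]; norm_num
  have h3 : k.factorial * m.factorial ≤ (m+k).factorial := by
    have := Nat.factorial_mul_factorial_dvd_factorial_add k m
    rw [show k + m = m + k by omega] at this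
    exact Nat.le_of_dvd (Nat.factorial_pos _) this
  calc m.factorial * (2*k).factorial = (2*k).choose k * ((k.factorial * m.factorial) * k.factorial) := by
        rw [← h1]; ring
    _ ≤ 4^k * (((m+k).factorial) * k.factorial) :=
        Nat.mul_le_mul h2 (Nat.mul_le_mul_right _ h3)
    _ = 4^k * (k.factorial * (m+k).factorial) := by ring

lemma besselI_nonneg (m : ℕ) {x : ℝ} (hx : 0 ≤ x) : 0 ≤ besselI m x :=
  tsum_nonneg fun k => by positivity

lemma besselI_le (m : ℕ) {x y : ℝ} (hx : 0 ≤ x) (hxy : x ≤ y) :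
    besselI m x ≤ (y / 2) ^ m * Real.exp y / m.factorial := by
  have hy : 0 ≤ y := hx.trans hxy
  set c : ℝ := (y / 2) ^ m / m.factorial with hc
  have hc0 : 0 ≤ c := by positivity
  have key : ∀ k : ℕ, (x / 2) ^ (m + 2 * k) / ((k.factorial : ℝ) * (m + k).factorial)
      ≤ c * (y ^ (2 * k) / (2 * k).factorial) := by
    intro k
    have hd1 : (0:ℝ) < (k.factorial : ℝ) * (m + k).factorial := by positivity
    calc (x / 2) ^ (m + 2 * k) / ((k.factorial : ℝ) * (m + k).factorial)
        ≤ (y / 2) ^ (m + 2 * k) / ((k.factorial : ℝ) * (m + k).factorial) := by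
          gcongr <;> linarith
      _ = ((y/2)^m * y^(2*k)) / (4^k * ((k.factorial : ℝ) * (m + k).factorial)) := by
          rw [pow_add, div_pow y 2 (2*k), show ((2:ℝ)) ^ (2*k) = 4^k from by rw [pow_mul]; norm_num]
          ring
      _ ≤ ((y/2)^m * y^(2*k)) / ((m.factorial : ℝ) * (2*k).factorial) := by
          apply div_le_div_of_nonneg_left (by positivity) (by positivity)
          exact_mod_cast fact_ineq m k
      _ = c * (y ^ (2 * k) / (2 * k).factorial) := by
          rw [hc]; ring
  have hsumg : Summable (fun n : ℕ => c * (y ^ n / n.factorial)) :=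
    (Real.summable_pow_div_factorial y).mul_left c
  have hsub : Summable (fun k : ℕ => c * (y ^ (2*k) / (2*k).factorial)) :=
    hsumg.comp_injective (fun a b h => by omega)
  have hsumf : Summable (fun k : ℕ =>
      (x / 2) ^ (m + 2 * k) / ((k.factorial : ℝ) * (m + k).factorial)) :=
    Summable.of_nonneg_of_le (fun k => by positivity) key hsub
  have hexp : Real.exp y = ∑' n : ℕ, y ^ n / n.factorial := by
    rw [Real.exp_eq_exp_ℝ, NormedSpace.exp_eq_tsum_div]
  calc besselI m x
      ≤ ∑' n : ℕ, c * (y ^ n / n.factorial) :=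
        Summable.tsum_le_tsum_of_inj (fun k => 2*k) (fun a b h => by dsimp only at h; omega)
          (fun n _ => by positivity) key hsumf hsumg
    _ = (y / 2) ^ m * Real.exp y / m.factorial := by
        rw [tsum_mul_left, hexp, hc]; ring

lemma besselK_nonneg (m : ℕ) {x : ℝ} (hx : 0 ≤ x) : 0 ≤ besselK m x := by
  apply mul_nonneg
  · have := Real.Gamma_pos_of_pos (show (0:ℝ) < (m:ℝ) + 1/2 by positivity)
    positivity
  · apply setIntegral_nonneg measurableSet_Ioi
    intro t ht
    have ht1 : (1:ℝ) < t := ht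
    have : (0:ℝ) ≤ t^2 - 1 := by nlinarith
    positivity

lemma besselK_le (n : ℕ) {x : ℝ} (hx : 0 < x) :
    besselK (n+1) x ≤ ((n.factorial : ℝ) * 2 ^ n) / x ^ (n+1) := by
  set m : ℕ := n + 1 with hm
  have hmr : ((m:ℝ)) = (n:ℝ) + 1 := by push_cast [hm]; ring
  set s : ℝ := 2 * (m:ℝ) with hs
  set g : ℝ → ℝ := fun t => t ^ (s - 1) * Real.exp (-(x * t)) with hgdef
  have hg_int : IntegrableOn g (Set.Ioi 0) := by
    have h := integrableOn_rpow_mul_exp_neg_mul_rpow (p := 1) (s := s - 1) (b := x)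
      (by rw [hs, hmr]; norm_num; linarith [n.cast_nonneg (α := ℝ)]) zero_lt_one hx
    apply h.congr_fun (fun t ht => ?_) measurableSet_Ioi
    rw [Real.rpow_one]
    simp only [hgdef]
    ring_nf
  have hg_val : ∫ t in Set.Ioi (0:ℝ), g t = (1/x) ^ s * Real.Gamma s :=
    Real.integral_rpow_mul_exp_neg_mul_Ioi (by rw [hs, hmr]; positivity) hx
  set f : ℝ → ℝ := fun t => Real.exp (-x * t) * (t ^ 2 - 1) ^ ((m : ℝ) - 1 / 2) with hfdef
  have hfg : ∀ t ∈ Set.Ioi (1:ℝ), f t ≤ g t := by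
    intro t ht
    have ht1 : (1:ℝ) < t := ht
    have ht0 : (0:ℝ) < t := by linarith
    have h1 : (t^2 - 1) ^ ((m:ℝ) - 1/2) ≤ (t^2) ^ ((m:ℝ) - 1/2) := by
      apply Real.rpow_le_rpow (by nlinarith) (by nlinarith)
      rw [hmr]; linarith [n.cast_nonneg (α := ℝ)]
    have h2 : (t^2 : ℝ) ^ ((m:ℝ) - 1/2) = t ^ (s - 1) := by
      rw [← Real.rpow_natCast t 2, ← Real.rpow_mul ht0.le]
      congr 1
      rw [hs]; push_cast; ring
    calc f t ≤ Real.exp (-x * t) * (t^2) ^ ((m:ℝ) - 1/2) := by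
          apply mul_le_mul_of_nonneg_left h1 (Real.exp_pos _).le
      _ = g t := by rw [h2, hgdef]; dsimp only; rw [neg_mul]; ring
  have hf_nonneg : ∀ t ∈ Set.Ioi (1:ℝ), 0 ≤ f t := by
    intro t ht
    have ht1 : (1:ℝ) < t := ht
    have h0 : (0:ℝ) ≤ t^2 - 1 := by nlinarith
    exact mul_nonneg (Real.exp_pos _).le (Real.rpow_nonneg h0 _)
  have hg1_int : IntegrableOn g (Set.Ioi 1) :=
    hg_int.mono_set (Set.Ioi_subset_Ioi zero_le_one)
  have hf_meas : AEStronglyMeasurable f (volume.restrict (Set.Ioi 1)) := by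
    apply Continuous.aestronglyMeasurable
    have hq : (0:ℝ) ≤ (m:ℝ) - 1/2 := by
      rw [hmr]; linarith [n.cast_nonneg (α := ℝ)]
    exact (Real.continuous_exp.comp (continuous_const.mul continuous_id)).mul
      ((Real.continuous_rpow_const hq).comp ((continuous_pow 2).sub continuous_const))
  have hf_int : IntegrableOn f (Set.Ioi 1) := by
    apply Integrable.mono' hg1_int hf_meas
    refine (ae_restrict_iff' measurableSet_Ioi).mpr (ae_of_all _ fun t ht => ?_)
    rw [Real.norm_eq_abs, abs_of_nonneg (hf_nonneg t ht)]
    exact hfg t ht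
  have hg_nonneg : ∀ t ∈ Set.Ioi (0:ℝ), 0 ≤ g t := by
    intro t ht
    exact mul_nonneg (Real.rpow_nonneg (le_of_lt ht) _) (Real.exp_pos _).le
  have hint_le : ∫ t in Set.Ioi (1:ℝ), f t ≤ (1/x) ^ s * Real.Gamma s := by
    calc ∫ t in Set.Ioi (1:ℝ), f t ≤ ∫ t in Set.Ioi (1:ℝ), g t :=
          setIntegral_mono_on hf_int hg1_int measurableSet_Ioi hfg
      _ ≤ ∫ t in Set.Ioi (0:ℝ), g t := by
          apply setIntegral_mono_set hg_int
          · exact (ae_restrict_iff' measurableSet_Ioi).mpr (ae_of_all _ hg_nonneg)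
          · exact HasSubset.Subset.eventuallyLE (Set.Ioi_subset_Ioi zero_le_one)
      _ = (1/x) ^ s * Real.Gamma s := hg_val
  -- Gamma computations
  have hΓs : Real.Gamma s = ((2*n+1).factorial : ℝ) := by
    rw [show s = ((2*n+1 : ℕ):ℝ) + 1 by rw [hs, hmr]; push_cast; ring]
    exact Real.Gamma_nat_eq_factorial (2*n+1)
  have hΓm : Real.Gamma ((m:ℝ)) = (n.factorial : ℝ) := by
    rw [hmr]
    exact_mod_cast Real.Gamma_nat_eq_factorial n
  have hdup := Real.Gamma_mul_Gamma_add_half (m:ℝ)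
  have hpow2 : (2:ℝ) ^ (1 - 2*(m:ℝ)) = 2 / (2:ℝ)^(2*n+2) := by
    rw [Real.rpow_sub two_pos, Real.rpow_one]
    congr 1
    rw [show (2*(m:ℝ)) = ((2*n+2 : ℕ):ℝ) by rw [hmr]; push_cast; ring]
    exact Real.rpow_natCast 2 (2*n+2)
  have hΓhalf : Real.Gamma ((m:ℝ) + 1/2)
      = ((2*n+1).factorial : ℝ) * (2 / (2:ℝ)^(2*n+2)) * Real.sqrt π / (n.factorial : ℝ) := by
    rw [hΓm, ← hs, hΓs, hpow2] at hdup
    have hnf : (n.factorial : ℝ) ≠ 0 := by positivity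
    rw [eq_div_iff hnf]
    linarith [hdup]
  have hCpos : 0 < Real.Gamma ((m:ℝ) + 1/2) := Real.Gamma_pos_of_pos (by positivity)
  have hpows : (1/x) ^ s = (1/x) ^ (2*n+2 : ℕ) := by
    rw [show s = ((2*n+2 : ℕ):ℝ) by rw [hs, hmr]; push_cast; ring]
    exact Real.rpow_natCast _ _
  have : besselK m x ≤ Real.sqrt π * (x / 2) ^ m / Real.Gamma ((m : ℝ) + 1 / 2)
      * ((1/x) ^ s * Real.Gamma s) := by
    apply mul_le_mul_of_nonneg_left hint_le
    have hsp : Real.sqrt π ≥ 0 := Real.sqrt_nonneg _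
    positivity
  refine this.trans (le_of_eq ?_)
  rw [hΓhalf, hΓs, hpows]
  have hsp : Real.sqrt π > 0 := Real.sqrt_pos.mpr Real.pi_pos
  have hnf : (0:ℝ) < (n.factorial : ℝ) := by positivity
  have h2f : (0:ℝ) < ((2*n+1).factorial : ℝ) := by positivity
  rw [hm]
  field_simp
  ring_nf
  simp only [inv_pow, one_div]
  field_simp
  ring


lemma T_arith (n : ℕ) (E f Γ a A₁ A₂ : ℝ) (hf : f ≠ 0) (hA₁ : A₁ ≠ 0) (hA₂ : A₂ ≠ 0)
    (hn : ((n:ℝ)+1) ≠ 0) :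
    (f * 2^n / A₁^(n+1)) * (f * 2^n / A₂^(n+1))
      * (((Γ*a/2)^(n+1) * E / (((n:ℝ)+1) * f))^2 * (a^2/2))
    = E * E * a^2/8 * (((Γ*a)^2/(A₁*A₂))^(n+1) / ((n:ℝ)+1)^2) := by
  field_simp
  ring_nf
  simp only [inv_pow, one_div]
  field_simp

set_option maxHeartbeats 1000000 in
theorem T_decay (Γ a A₁ A₂ q : ℝ) (hΓ : 0 < Γ) (ha : 0 < a) (hA₁ : 0 < A₁)
    (hA₂ : 0 < A₂) (hq : q = (Γ * a) ^ 2 / (A₁ * A₂)) (T : ℕ → ℝ)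
    (hT : ∀ m : ℕ, T m =
      besselK m A₁ * besselK m A₂ * ∫ r in (0:ℝ)..a, (besselI m (Γ * r)) ^ 2 * r) :
    (∀ m : ℕ, 1 ≤ m → T m ≤ Real.exp (2 * Γ * a) * a ^ 2 / 8 * (q ^ m / (m : ℝ) ^ 2)) ∧
    (q < 1 → Summable fun m : ℕ => |T (m + 1)|) := by
  have hq0 : 0 ≤ q := by rw [hq]; positivity
  have key : ∀ m : ℕ, 1 ≤ m → T m ≤ Real.exp (2 * Γ * a) * a ^ 2 / 8 * (q ^ m / (m : ℝ) ^ 2) := by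
    intro m hm
    obtain ⟨n, rfl⟩ : ∃ n, m = n + 1 := ⟨m - 1, by omega⟩
    set B : ℝ := ((Γ * a / 2) ^ (n+1) * Real.exp (Γ * a) / (n+1).factorial) ^ 2 with hB
    have hB0 : 0 ≤ B := sq_nonneg _
    have hJ0 : 0 ≤ ∫ r in (0:ℝ)..a, (besselI (n+1) (Γ * r)) ^ 2 * r :=
      intervalIntegral.integral_nonneg ha.le fun u hu => mul_nonneg (sq_nonneg _) hu.1
    have hJ : (∫ r in (0:ℝ)..a, (besselI (n+1) (Γ * r)) ^ 2 * r) ≤ B * (a ^ 2 / 2) := by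
      by_cases hint : IntervalIntegrable (fun r => (besselI (n+1) (Γ * r)) ^ 2 * r) volume 0 a
      · have hmono : ∀ r ∈ Set.Icc (0:ℝ) a, (besselI (n+1) (Γ * r)) ^ 2 * r ≤ B * r := by
          intro r hr
          have h0 : 0 ≤ Γ * r := mul_nonneg hΓ.le hr.1
          have h1 : besselI (n+1) (Γ * r)
              ≤ (Γ * a / 2) ^ (n+1) * Real.exp (Γ * a) / (n+1).factorial :=
            besselI_le (n+1) h0 (by nlinarith [hr.2])
          have h2 : (besselI (n+1) (Γ * r)) ^ 2 ≤ B := by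
            rw [hB]
            exact pow_le_pow_left₀ (besselI_nonneg _ h0) h1 2
          exact mul_le_mul_of_nonneg_right h2 hr.1
        calc (∫ r in (0:ℝ)..a, (besselI (n+1) (Γ * r)) ^ 2 * r)
            ≤ ∫ r in (0:ℝ)..a, B * r :=
              intervalIntegral.integral_mono_on ha.le hint
                (by apply Continuous.intervalIntegrable; continuity) hmono
          _ = B * (a ^ 2 / 2) := by
              rw [intervalIntegral.integral_const_mul, integral_id]; ring
      · rw [intervalIntegral.integral_undef hint]; positivity
    have hK1 := besselK_le n hA₁
    have hK2 := besselK_le n hA₂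
    have hK10 : 0 ≤ besselK (n+1) A₁ := besselK_nonneg _ hA₁.le
    have hK20 : 0 ≤ besselK (n+1) A₂ := besselK_nonneg _ hA₂.le
    rw [hT]
    have step : besselK (n+1) A₁ * besselK (n+1) A₂
          * (∫ r in (0:ℝ)..a, (besselI (n+1) (Γ * r)) ^ 2 * r)
        ≤ ((n.factorial : ℝ) * 2 ^ n / A₁ ^ (n+1)) * ((n.factorial : ℝ) * 2 ^ n / A₂ ^ (n+1))
          * (B * (a ^ 2 / 2)) := by
      apply mul_le_mul (mul_le_mul hK1 hK2 hK20 (by positivity)) hJ hJ0 (by positivity)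
    refine step.trans (le_of_eq ?_)
    have hfac : (((n+1).factorial : ℕ) : ℝ) = ((n:ℝ) + 1) * n.factorial := by
      rw [Nat.factorial_succ]; push_cast; ring
    have hexp2 : Real.exp (2 * Γ * a) = Real.exp (Γ * a) * Real.exp (Γ * a) := by
      rw [← Real.exp_add]; ring_nf
    rw [hq, hB, hfac, hexp2, show (((n+1 : ℕ)) : ℝ) = (n:ℝ)+1 from by push_cast; ring]
    exact T_arith n _ _ Γ a A₁ A₂ (by positivity) (by positivity) (by positivity) (by positivity)
  refine ⟨key, fun hq1 => ?_⟩
  have hle : ∀ m : ℕ, |T (m + 1)| ≤ (Real.exp (2 * Γ * a) * a ^ 2 / 8 * q) * q ^ m := by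
    intro m
    have hTnn : 0 ≤ T (m+1) := by
      rw [hT]
      exact mul_nonneg (mul_nonneg (besselK_nonneg _ hA₁.le) (besselK_nonneg _ hA₂.le))
        (intervalIntegral.integral_nonneg ha.le fun u hu => mul_nonneg (sq_nonneg _) hu.1)
    rw [abs_of_nonneg hTnn]
    have h1 : (1:ℝ) ≤ ((m+1 : ℕ) : ℝ) ^ 2 := by
      have : (1:ℝ) ≤ ((m+1 : ℕ) : ℝ) := by exact_mod_cast Nat.one_le_iff_ne_zero.mpr (by omega)
      nlinarith
    calc T (m+1) ≤ Real.exp (2 * Γ * a) * a ^ 2 / 8 * (q ^ (m+1) / ((m+1 : ℕ) : ℝ) ^ 2) :=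
          key (m+1) (by omega)
      _ ≤ Real.exp (2 * Γ * a) * a ^ 2 / 8 * q ^ (m+1) := by
          apply mul_le_mul_of_nonneg_left _ (by positivity)
          exact div_le_self (by positivity) h1
      _ = (Real.exp (2 * Γ * a) * a ^ 2 / 8 * q) * q ^ m := by rw [pow_succ]; ring
  have hsum : Summable (fun m : ℕ => (Real.exp (2 * Γ * a) * a ^ 2 / 8 * q) * q ^ m) :=
    (summable_geometric_of_lt_one hq0 hq1).mul_left _
  exact Summable.of_nonneg_of_le (fun m => abs_nonneg _) hle hsum
end

section
/- Let (a_n)_{n≥1}, (b_n)_{n≥1} be nonnegative sequences decaying exponentially, and define H(θ) = S_a(θ)C_b(θ) − C_a(θ)S_b(θ) where S_a(θ) = Σ n a_n sin(nθ), C_a(θ) = Σ a_m cos(mθ), similarly for b. Then |H(θ)| ≤ Ξ·sin θ for all θ ∈ [0, π], where Ξ = Σ_{n,m≥1} a_n b_m |n² − m²|. -/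
open Real

lemma abs_sin_nat_mul_le (k : ℕ) {θ : ℝ} (h0 : 0 ≤ θ) (hπ : θ ≤ π) :
    |Real.sin (k * θ)| ≤ k * Real.sin θ := by
  induction k with
  | zero => simp
  | succ k ih =>
    have hs : 0 ≤ Real.sin θ := Real.sin_nonneg_of_nonneg_of_le_pi h0 hπ
    have hc : |Real.cos θ| ≤ 1 := Real.abs_cos_le_one θ
    have hck : |Real.cos (k * θ)| ≤ 1 := Real.abs_cos_le_one _
    have hrw : ((k + 1 : ℕ) : ℝ) * θ = k * θ + θ := by push_cast; ring
    rw [hrw, Real.sin_add]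
    have h1 : |Real.sin (k * θ) * Real.cos θ + Real.cos (k * θ) * Real.sin θ|
        ≤ |Real.sin (k * θ) * Real.cos θ| + |Real.cos (k * θ) * Real.sin θ| := abs_add_le _ _
    have h2 : |Real.sin (k * θ) * Real.cos θ| ≤ |Real.sin (k * θ)| := by
      rw [abs_mul]
      nlinarith [abs_nonneg (Real.sin (k * θ))]
    have h3 : |Real.cos (k * θ) * Real.sin θ| ≤ Real.sin θ := by
      rw [abs_mul, abs_of_nonneg hs]
      nlinarith
    push_cast
    linarith

lemma abs_sin_sub_nat (p q : ℕ) {θ : ℝ} (h0 : 0 ≤ θ) (hπ : θ ≤ π) :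
    |Real.sin (((p : ℝ) - q) * θ)| ≤ |(p : ℝ) - q| * Real.sin θ := by
  rcases le_total q p with h | h
  · have hc : ((p - q : ℕ) : ℝ) = (p : ℝ) - q := by
      push_cast [Nat.cast_sub h]; ring
    rw [← hc, abs_of_nonneg (by positivity : (0:ℝ) ≤ ((p - q : ℕ) : ℝ))]
    exact abs_sin_nat_mul_le _ h0 hπ
  · have hc : ((q - p : ℕ) : ℝ) = (q : ℝ) - p := by
      push_cast [Nat.cast_sub h]; ring
    have h1 : ((p : ℝ) - q) * θ = -(((q - p : ℕ) : ℝ) * θ) := by rw [hc]; ring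
    have h2 : |(p : ℝ) - q| = ((q - p : ℕ) : ℝ) := by
      rw [hc, abs_sub_comm, abs_of_nonneg (by linarith [(Nat.cast_le (α := ℝ)).mpr h] : (0:ℝ) ≤ (q:ℝ) - p)]
    rw [h1, Real.sin_neg, abs_neg, h2]
    exact abs_sin_nat_mul_le _ h0 hπ

lemma key_bound (N M : ℕ) {θ : ℝ} (h0 : 0 ≤ θ) (hπ : θ ≤ π) :
    |(N : ℝ) * Real.sin (N * θ) * Real.cos (M * θ)
      - (M : ℝ) * Real.cos (N * θ) * Real.sin (M * θ)|
      ≤ |(N : ℝ) ^ 2 - (M : ℝ) ^ 2| * Real.sin θ := by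
  have hs : 0 ≤ Real.sin θ := Real.sin_nonneg_of_nonneg_of_le_pi h0 hπ
  have hid : (N : ℝ) * Real.sin (N * θ) * Real.cos (M * θ)
      - (M : ℝ) * Real.cos (N * θ) * Real.sin (M * θ)
      = (((N : ℝ) - M) / 2) * Real.sin (((N : ℝ) + M) * θ)
        + (((N : ℝ) + M) / 2) * Real.sin (((N : ℝ) - M) * θ) := by
    have e1 : ((N : ℝ) + M) * θ = N * θ + M * θ := by ring
    have e2 : ((N : ℝ) - M) * θ = N * θ - M * θ := by ring
    rw [e1, e2, Real.sin_add, Real.sin_sub]; ring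
  have b1 : |Real.sin (((N : ℝ) + M) * θ)| ≤ ((N : ℝ) + M) * Real.sin θ := by
    have := abs_sin_nat_mul_le (N + M) h0 hπ
    push_cast at this
    exact this
  have b2 : |Real.sin (((N : ℝ) - M) * θ)| ≤ |(N : ℝ) - M| * Real.sin θ :=
    abs_sin_sub_nat N M h0 hπ
  have hfact : |(N : ℝ) ^ 2 - (M : ℝ) ^ 2| = |(N : ℝ) - M| * ((N : ℝ) + M) := by
    have : (N : ℝ) ^ 2 - (M : ℝ) ^ 2 = ((N : ℝ) - M) * ((N : ℝ) + M) := by ring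
    rw [this, abs_mul, abs_of_nonneg (by positivity : (0:ℝ) ≤ (N : ℝ) + M)]
  rw [hid, hfact]
  calc |(((N : ℝ) - M) / 2) * Real.sin (((N : ℝ) + M) * θ)
        + (((N : ℝ) + M) / 2) * Real.sin (((N : ℝ) - M) * θ)|
      ≤ |(((N : ℝ) - M) / 2) * Real.sin (((N : ℝ) + M) * θ)|
        + |(((N : ℝ) + M) / 2) * Real.sin (((N : ℝ) - M) * θ)| := abs_add_le _ _
    _ = (|(N : ℝ) - M| / 2) * |Real.sin (((N : ℝ) + M) * θ)|
        + (((N : ℝ) + M) / 2) * |Real.sin (((N : ℝ) - M) * θ)| := by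
        rw [abs_mul, abs_mul, abs_div, abs_two,
          abs_of_nonneg (by positivity : (0:ℝ) ≤ ((N : ℝ) + M) / 2)]
    _ ≤ (|(N : ℝ) - M| / 2) * (((N : ℝ) + M) * Real.sin θ)
        + (((N : ℝ) + M) / 2) * (|(N : ℝ) - M| * Real.sin θ) := by
        have g1 := mul_le_mul_of_nonneg_left b1 (by positivity : (0:ℝ) ≤ |(N : ℝ) - M| / 2)
        have g2 := mul_le_mul_of_nonneg_left b2 (by positivity : (0:ℝ) ≤ ((N : ℝ) + M) / 2)
        linarith
    _ = |(N : ℝ) - M| * ((N : ℝ) + M) * Real.sin θ := by ring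

set_option maxHeartbeats 1000000 in
lemma summable_aux {f : ℕ → ℝ} {C r : ℝ} (hr : 0 < r)
    (hf0 : ∀ n, 0 ≤ f n) (hf : ∀ n : ℕ, f n ≤ C * Real.exp (-r * n)) (k : ℕ) :
    Summable (fun n : ℕ => ((n : ℝ) + 1) ^ k * f (n + 1)) := by
  have hlt : ‖Real.exp (-r)‖ < 1 := by
    rw [Real.norm_eq_abs, abs_of_pos (Real.exp_pos _)]
    exact Real.exp_lt_one_iff.mpr (by linarith)
  have hgeom : Summable (fun n : ℕ => (n : ℝ) ^ k * Real.exp (-r) ^ n) :=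
    summable_pow_mul_geometric_of_norm_lt_one k hlt
  have hshift : Summable (fun n : ℕ => ((n + 1 : ℕ) : ℝ) ^ k * Real.exp (-r) ^ (n + 1)) :=
    (summable_nat_add_iff 1).mpr hgeom
  refine Summable.of_nonneg_of_le (fun n => mul_nonneg (by positivity) (hf0 _)) (fun n => ?_)
    (hshift.mul_left C)
  have he : Real.exp (-r) ^ (n + 1) = Real.exp (-r * ((n + 1 : ℕ) : ℝ)) := by
    rw [← Real.exp_nat_mul]; ring_nf
  calc ((n : ℝ) + 1) ^ k * f (n + 1)
      ≤ ((n : ℝ) + 1) ^ k * (C * Real.exp (-r * ((n + 1 : ℕ) : ℝ))) :=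
        mul_le_mul_of_nonneg_left (hf (n + 1)) (by positivity)
    _ = C * (((n + 1 : ℕ) : ℝ) ^ k * Real.exp (-r) ^ (n + 1)) := by
        rw [he]; push_cast; ring

set_option maxHeartbeats 2000000 in
theorem H_bound (a b : ℕ → ℝ)
    (ha_nonneg : ∀ n, 0 ≤ a n) (hb_nonneg : ∀ n, 0 ≤ b n)
    (ha_dec : ∃ Ca ra : ℝ, 0 < Ca ∧ 0 < ra ∧ ∀ n : ℕ, a n ≤ Ca * Real.exp (-ra * n))
    (hb_dec : ∃ Cb rb : ℝ, 0 < Cb ∧ 0 < rb ∧ ∀ n : ℕ, b n ≤ Cb * Real.exp (-rb * n))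
    (Sa Sb Ca' Cb' H : ℝ → ℝ)
    (hSa : ∀ θ, Sa θ = ∑' n : ℕ, ((n : ℝ) + 1) * a (n + 1) * Real.sin ((n + 1) * θ))
    (hSb : ∀ θ, Sb θ = ∑' n : ℕ, ((n : ℝ) + 1) * b (n + 1) * Real.sin ((n + 1) * θ))
    (hCa : ∀ θ, Ca' θ = ∑' m : ℕ, a (m + 1) * Real.cos ((m + 1) * θ))
    (hCb : ∀ θ, Cb' θ = ∑' m : ℕ, b (m + 1) * Real.cos ((m + 1) * θ))
    (hH : ∀ θ, H θ = Sa θ * Cb' θ - Ca' θ * Sb θ)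
    (Ξ : ℝ)
    (hΞ : Ξ = ∑' n : ℕ, ∑' m : ℕ,
      a (n + 1) * b (m + 1) * |((n : ℝ) + 1) ^ 2 - ((m : ℝ) + 1) ^ 2|) :
    ∀ θ ∈ Set.Icc (0 : ℝ) π, |H θ| ≤ Ξ * Real.sin θ := by
  intro θ hθ
  obtain ⟨hθ0, hθπ⟩ := hθ
  obtain ⟨CA, ra, hCA, hra, hadec⟩ := ha_dec
  obtain ⟨CB, rb, hCB, hrb, hbdec⟩ := hb_dec
  have hs : 0 ≤ Real.sin θ := Real.sin_nonneg_of_nonneg_of_le_pi hθ0 hθπ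
  -- summability of weighted sequences
  have hAk : ∀ k : ℕ, Summable (fun n : ℕ => ((n : ℝ) + 1) ^ k * a (n + 1)) :=
    fun k => summable_aux hra ha_nonneg hadec k
  have hBk : ∀ k : ℕ, Summable (fun n : ℕ => ((n : ℝ) + 1) ^ k * b (n + 1)) :=
    fun k => summable_aux hrb hb_nonneg hbdec k
  have hA0 : Summable (fun n : ℕ => a (n + 1)) := by simpa using hAk 0
  have hB0 : Summable (fun n : ℕ => b (n + 1)) := by simpa using hBk 0
  have hA1 : Summable (fun n : ℕ => ((n : ℝ) + 1) * a (n + 1)) := by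
    simpa [pow_one] using hAk 1
  have hB1 : Summable (fun n : ℕ => ((n : ℝ) + 1) * b (n + 1)) := by
    simpa [pow_one] using hBk 1
  have hA2 : Summable (fun n : ℕ => ((n : ℝ) + 1) ^ 2 * a (n + 1)) := hAk 2
  have hB2 : Summable (fun n : ℕ => ((n : ℝ) + 1) ^ 2 * b (n + 1)) := hBk 2
  -- define the double-sum terms
  set x : ℕ → ℕ → ℝ := fun n m =>
    (((n : ℝ) + 1) * a (n + 1) * Real.sin (((n : ℝ) + 1) * θ)) *
      (b (m + 1) * Real.cos (((m : ℝ) + 1) * θ)) with hx_def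
  set y : ℕ → ℕ → ℝ := fun n m =>
    (a (n + 1) * Real.cos (((n : ℝ) + 1) * θ)) *
      (((m : ℝ) + 1) * b (m + 1) * Real.sin (((m : ℝ) + 1) * θ)) with hy_def
  set G : ℕ → ℕ → ℝ := fun n m =>
    a (n + 1) * b (m + 1) * |((n : ℝ) + 1) ^ 2 - ((m : ℝ) + 1) ^ 2| with hG_def
  have hG_nonneg : ∀ n m, 0 ≤ G n m := fun n m =>
    mul_nonneg (mul_nonneg (ha_nonneg _) (hb_nonneg _)) (abs_nonneg _)
  -- pointwise key bound
  have hkey : ∀ n m : ℕ, |x n m - y n m| ≤ G n m * Real.sin θ := by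
    intro n m
    have h := key_bound (n + 1) (m + 1) hθ0 hθπ
    push_cast at h
    have hxy : x n m - y n m = (a (n + 1) * b (m + 1)) *
        (((n : ℝ) + 1) * Real.sin (((n : ℝ) + 1) * θ) * Real.cos (((m : ℝ) + 1) * θ)
          - ((m : ℝ) + 1) * Real.cos (((n : ℝ) + 1) * θ) * Real.sin (((m : ℝ) + 1) * θ)) := by
      simp only [hx_def, hy_def]; ring
    rw [hxy, abs_mul, abs_of_nonneg (mul_nonneg (ha_nonneg _) (hb_nonneg _))]
    calc a (n + 1) * b (m + 1) *
          |((n : ℝ) + 1) * Real.sin (((n : ℝ) + 1) * θ) * Real.cos (((m : ℝ) + 1) * θ)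
            - ((m : ℝ) + 1) * Real.cos (((n : ℝ) + 1) * θ) * Real.sin (((m : ℝ) + 1) * θ)|
        ≤ a (n + 1) * b (m + 1) * (|((n : ℝ) + 1) ^ 2 - ((m : ℝ) + 1) ^ 2| * Real.sin θ) :=
          mul_le_mul_of_nonneg_left h (mul_nonneg (ha_nonneg _) (hb_nonneg _))
      _ = G n m * Real.sin θ := by rw [hG_def]; ring
  -- summability of G over the product
  have hGsum : Summable (fun p : ℕ × ℕ => G p.1 p.2) := by
    have hbig : Summable (fun p : ℕ × ℕ =>
        (((p.1 : ℝ) + 1) ^ 2 * a (p.1 + 1)) * b (p.2 + 1)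
          + a (p.1 + 1) * (((p.2 : ℝ) + 1) ^ 2 * b (p.2 + 1))) := by
      exact (hA2.mul_of_nonneg hB0
          (fun n => mul_nonneg (by positivity) (ha_nonneg _)) (fun m => hb_nonneg _)).add
        (hA0.mul_of_nonneg hB2 (fun n => ha_nonneg _)
          (fun m => mul_nonneg (by positivity) (hb_nonneg _)))
    refine Summable.of_nonneg_of_le (fun p => hG_nonneg _ _) (fun p => ?_) hbig
    have habs : |((p.1 : ℝ) + 1) ^ 2 - ((p.2 : ℝ) + 1) ^ 2|
        ≤ ((p.1 : ℝ) + 1) ^ 2 + ((p.2 : ℝ) + 1) ^ 2 := by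
      have h1 := abs_sub (((p.1 : ℝ) + 1) ^ 2) (((p.2 : ℝ) + 1) ^ 2)
      rwa [abs_of_nonneg (by positivity : (0:ℝ) ≤ ((p.1 : ℝ) + 1) ^ 2),
        abs_of_nonneg (by positivity : (0:ℝ) ≤ ((p.2 : ℝ) + 1) ^ 2)] at h1
    calc G p.1 p.2
        ≤ a (p.1 + 1) * b (p.2 + 1) * (((p.1 : ℝ) + 1) ^ 2 + ((p.2 : ℝ) + 1) ^ 2) := by
          rw [hG_def]
          exact mul_le_mul_of_nonneg_left habs (mul_nonneg (ha_nonneg _) (hb_nonneg _))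
      _ = (((p.1 : ℝ) + 1) ^ 2 * a (p.1 + 1)) * b (p.2 + 1)
          + a (p.1 + 1) * (((p.2 : ℝ) + 1) ^ 2 * b (p.2 + 1)) := by ring
  have hGrow : ∀ n, Summable (fun m => G n m) := fun n =>
    ((summable_prod_of_nonneg (fun p => hG_nonneg p.1 p.2)).mp hGsum).1 n
  have hGmarg : Summable (fun n => ∑' m, G n m) :=
    ((summable_prod_of_nonneg (fun p => hG_nonneg p.1 p.2)).mp hGsum).2
  -- rowwise summability of x and y
  have hbcos : Summable (fun m : ℕ => b (m + 1) * Real.cos (((m : ℝ) + 1) * θ)) := by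
    refine Summable.of_norm_bounded hB0 (fun m => ?_)
    rw [Real.norm_eq_abs, abs_mul, abs_of_nonneg (hb_nonneg _)]
    exact mul_le_of_le_one_right (hb_nonneg _) (Real.abs_cos_le_one _)
  have hbsin : Summable (fun m : ℕ => ((m : ℝ) + 1) * b (m + 1) * Real.sin (((m : ℝ) + 1) * θ)) := by
    refine Summable.of_norm_bounded hB1 (fun m => ?_)
    rw [Real.norm_eq_abs, abs_mul, abs_of_nonneg (mul_nonneg (by positivity) (hb_nonneg _))]
    exact mul_le_of_le_one_right (mul_nonneg (by positivity) (hb_nonneg _)) (Real.abs_sin_le_one _)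
  have hasin : Summable (fun n : ℕ => ((n : ℝ) + 1) * a (n + 1) * Real.sin (((n : ℝ) + 1) * θ)) := by
    refine Summable.of_norm_bounded hA1 (fun n => ?_)
    rw [Real.norm_eq_abs, abs_mul, abs_of_nonneg (mul_nonneg (by positivity) (ha_nonneg _))]
    exact mul_le_of_le_one_right (mul_nonneg (by positivity) (ha_nonneg _)) (Real.abs_sin_le_one _)
  have hacos : Summable (fun n : ℕ => a (n + 1) * Real.cos (((n : ℝ) + 1) * θ)) := by
    refine Summable.of_norm_bounded hA0 (fun n => ?_)
    rw [Real.norm_eq_abs, abs_mul, abs_of_nonneg (ha_nonneg _)]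
    exact mul_le_of_le_one_right (ha_nonneg _) (Real.abs_cos_le_one _)
  have hxrow : ∀ n, Summable (fun m => x n m) := fun n => hbcos.mul_left _
  have hyrow : ∀ n, Summable (fun m => y n m) := fun n => hbsin.mul_left _
  -- product expansions
  have hSaCb : Sa θ * Cb' θ = ∑' n, ∑' m, x n m := by
    rw [hSa θ, hCb θ, ← tsum_mul_right]
    exact tsum_congr fun n => (tsum_mul_left).symm
  have hCaSb : Ca' θ * Sb θ = ∑' n, ∑' m, y n m := by
    rw [hCa θ, hSb θ, ← tsum_mul_right]
    exact tsum_congr fun n => (tsum_mul_left).symm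
  have hXsummable : Summable (fun n => ∑' m, x n m) := by
    have he : (fun n => ∑' m, x n m) = fun n : ℕ =>
        (((n : ℝ) + 1) * a (n + 1) * Real.sin (((n : ℝ) + 1) * θ)) *
          ∑' m, (b (m + 1) * Real.cos (((m : ℝ) + 1) * θ)) :=
      funext fun n => tsum_mul_left
    rw [he]
    exact hasin.mul_right _
  have hYsummable : Summable (fun n => ∑' m, y n m) := by
    have he : (fun n => ∑' m, y n m) = fun n : ℕ =>
        (a (n + 1) * Real.cos (((n : ℝ) + 1) * θ)) *
          ∑' m : ℕ, (((m : ℝ) + 1) * b (m + 1) * Real.sin (((m : ℝ) + 1) * θ)) :=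
      funext fun n => tsum_mul_left
    rw [he]
    exact hacos.mul_right _
  have hHrw : H θ = ∑' n, ∑' m, (x n m - y n m) := by
    rw [hH θ, hSaCb, hCaSb, ← Summable.tsum_sub hXsummable hYsummable]
    exact tsum_congr fun n => (Summable.tsum_sub (hxrow n) (hyrow n)).symm
  have hzrow : ∀ n, Summable (fun m => |x n m - y n m|) := fun n =>
    Summable.of_nonneg_of_le (fun m => abs_nonneg _) (fun m => hkey n m) ((hGrow n).mul_right _)
  have hrowbound : ∀ n, |∑' m, (x n m - y n m)| ≤ (∑' m, G n m) * Real.sin θ := by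
    intro n
    calc |∑' m, (x n m - y n m)|
        ≤ ∑' m, |x n m - y n m| := by
          simpa [Real.norm_eq_abs] using
            norm_tsum_le_tsum_norm (f := fun m => x n m - y n m)
              (by simpa [Real.norm_eq_abs] using hzrow n)
      _ ≤ ∑' m, G n m * Real.sin θ :=
          Summable.tsum_le_tsum (fun m => hkey n m) (hzrow n) ((hGrow n).mul_right _)
      _ = (∑' m, G n m) * Real.sin θ := tsum_mul_right
  have houter : Summable (fun n => |∑' m, (x n m - y n m)|) :=
    Summable.of_nonneg_of_le (fun n => abs_nonneg _) hrowbound (hGmarg.mul_right _)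
  rw [hHrw, hΞ]
  calc |∑' n, ∑' m, (x n m - y n m)|
      ≤ ∑' n, |∑' m, (x n m - y n m)| := by
        simpa [Real.norm_eq_abs] using
          norm_tsum_le_tsum_norm (f := fun n => ∑' m, (x n m - y n m))
            (by simpa [Real.norm_eq_abs] using houter)
    _ ≤ ∑' n, (∑' m, G n m) * Real.sin θ :=
        Summable.tsum_le_tsum hrowbound houter (hGmarg.mul_right _)
    _ = (∑' n, ∑' m, G n m) * Real.sin θ := tsum_mul_right
    _ = (∑' n, ∑' m, a (n + 1) * b (m + 1) * |((n : ℝ) + 1) ^ 2 - ((m : ℝ) + 1) ^ 2|)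
        * Real.sin θ := by rw [hG_def]
end

section
/- Let S, K be Hermitian complex N×N matrices partitioned with index set {1,…,N} = H ∪ {+, −}, satisfying the symmetry relations S_{i,+} = S_{i,−} and K_{i,+} = K_{i,−} for all i ∈ H, together with S_{+,+} = S_{−,−}, K_{+,+} = K_{−,−}, S_{+,−} = S_{−,+}, K_{+,−} = K_{−,+}, and S_{+,+} ≠ S_{+,−}. Define β := (K_{+,+} − K_{+,−})/(S_{+,+} − S_{+,−}). Then for any α ∈ ℂ, the vector C(z) with C_+(z) = α e^{iβz}, C_−(z) = −α e^{iβz}, and C_i(z) = 0 for i ∈ H, solves the system i S C'(z) + K C(z) = 0 for all z ≥ 0. -/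
open Matrix

theorem BIC_mode (ι : Type*) [Fintype ι] [DecidableEq ι]
    (S K : Matrix ι ι ℂ) (hS : S.IsHermitian) (hK : K.IsHermitian)
    (plus minus : ι) (hpm : plus ≠ minus)
    (hSrow : ∀ i, i ≠ plus → i ≠ minus → S i plus = S i minus)
    (hKrow : ∀ i, i ≠ plus → i ≠ minus → K i plus = K i minus)
    (hSdiag : S plus plus = S minus minus) (hKdiag : K plus plus = K minus minus)
    (hSoff : S plus minus = S minus plus) (hKoff : K plus minus = K minus plus)
    (hSne : S plus plus ≠ S plus minus)
    (β : ℂ) (hβ : β = (K plus plus - K plus minus) / (S plus plus - S plus minus))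
    (α : ℂ) (C : ℝ → ι → ℂ)
    (hC : ∀ z i, C z i =
      if i = plus then α * Complex.exp (Complex.I * β * z)
      else if i = minus then -α * Complex.exp (Complex.I * β * z) else 0) :
    ∀ z : ℝ, 0 ≤ z →
      Complex.I • S.mulVec (fun i => deriv (fun w : ℝ => C w i) z) +
        K.mulVec (C z) = 0 := by
  intro z _
  have key : β * (S plus plus - S plus minus) = K plus plus - K plus minus := by
    have h0 : S plus plus - S plus minus ≠ 0 := sub_ne_zero.mpr hSne
    rw [hβ, div_mul_cancel₀ _ h0]
  set e : ℂ := Complex.exp (Complex.I * β * z) with he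
  -- derivative of c * exp(I β w)
  have hd : ∀ (c : ℂ), HasDerivAt (fun w : ℝ => c * Complex.exp (Complex.I * β * w))
      (Complex.I * β * (c * e)) z := by
    intro c
    have h1 : HasDerivAt (fun w : ℝ => Complex.I * β * (w : ℂ)) (Complex.I * β) z := by
      simpa using (Complex.ofRealCLM.hasDerivAt (x := z)).const_mul (Complex.I * β)
    have h2 := h1.cexp
    have h3 := h2.const_mul c
    have h4 : Complex.I * β * (c * e) = c * (Complex.exp (Complex.I * β * z) * (Complex.I * β)) := by
      rw [he]; ring
    rw [h4]; exact h3
  have hderiv : (fun j => deriv (fun w : ℝ => C w j) z) =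
      fun j => if j = plus then Complex.I * β * (α * e)
        else if j = minus then -(Complex.I * β * (α * e)) else 0 := by
    funext j
    by_cases hjp : j = plus
    · subst hjp
      simp only [eq_self_iff_true, if_true]
      have : (fun w : ℝ => C w j) = fun w : ℝ => α * Complex.exp (Complex.I * β * w) := by
        funext w; simp [hC w j]
      rw [this, (hd α).deriv]
    · by_cases hjm : j = minus
      · subst hjm
        simp only [if_neg hjp, eq_self_iff_true, if_true]
        have : (fun w : ℝ => C w j) = fun w : ℝ => (-α) * Complex.exp (Complex.I * β * w) := by
          funext w; simp [hC w j, hjp]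
        rw [this, (hd (-α)).deriv]
        ring
      · simp only [hjp, hjm, if_false]
        have : (fun w : ℝ => C w j) = fun _ : ℝ => 0 := by
          funext w; simp [hC w j, hjp, hjm]
        rw [this, deriv_const]
  have hCz : C z = fun j => if j = plus then α * e
      else if j = minus then -(α * e) else 0 := by
    funext j
    rw [hC z j]
    by_cases hjp : j = plus <;> by_cases hjm : j = minus <;> simp [hjp, hjm, he] <;> ring
  funext i
  simp only [hderiv, hCz, Pi.add_apply, Pi.smul_apply, Pi.zero_apply, smul_eq_mul,
    Matrix.mulVec, dotProduct]
  have hsum : ∀ (x y : ℂ) (M : Matrix ι ι ℂ),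
      (∑ j, M i j * (if j = plus then x else if j = minus then y else 0)) =
        M i plus * x + M i minus * y := by
    intro x y M
    have : ∀ j, M i j * (if j = plus then x else if j = minus then y else 0) =
        (if j = plus then M i plus * x else 0) + (if j = minus then M i minus * y else 0) := by
      intro j
      by_cases hjp : j = plus <;> by_cases hjm : j = minus <;>
        simp_all [hpm]
    simp only [this, Finset.sum_add_distrib, Finset.sum_ite_eq', Finset.mem_univ, if_true]
  rw [hsum, hsum]
  by_cases hip : i = plus
  · subst hip
    linear_combination (-(α * e)) * key +
      (β * (α * e) * (S i i - S i minus)) * Complex.I_mul_I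
  · by_cases him : i = minus
    · subst him
      rw [← hSoff, ← hSdiag, ← hKoff, ← hKdiag]
      linear_combination (α * e) * key +
        (-(β * (α * e) * (S plus plus - S plus i))) * Complex.I_mul_I
    · rw [hSrow i hip him, hKrow i hip him]
      ring
end
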